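/- Let t > 0. The function h(x) = (1/x)·ln((x + t)/(x − t)) is strictly decreasing on (t, ∞). Consequently, for μ, σ, δ, γ > 0, setting λ₁ = (−μ − √(μ² + 2σ²δ))/σ², λ₂ = (−μ + √(μ² + 2σ²δ))/σ², λ₃ = (−μ − √(μ² + 2σ²(δ+γ)))/σ², λ₄ = (−μ + √(μ² + 2σ²(δ+γ)))/σ², one has ln((λ₃/λ₄)²)/(λ₄ − λ₃) < ln((λ₁/λ₂)²)/(λ₂ − λ₁); i.e., the localization interval for the root of G is nonempty. -/

import Mathlib

lemma aux_anti (t : ℝ) (ht : 0 < t) :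
    StrictAntiOn (fun x : ℝ => (1 / x) * Real.log ((x + t) / (x - t)))
      (Set.Ioi t) := by
  have key : ∀ x ∈ Set.Ioi t, HasDerivAt
      (fun x : ℝ => (1 / x) * Real.log ((x + t) / (x - t)))
      ((-1 / x ^ 2) * Real.log ((x + t) / (x - t))
        + (1 / x) * (-(2 * t) / ((x - t) * (x + t)))) x := by
    intro x hx
    have hxt : t < x := hx
    have hx0 : (0:ℝ) < x := ht.trans hxt
    have hmt : (0:ℝ) < x - t := by linarith
    have hpt : (0:ℝ) < x + t := by linarith
    have hg : HasDerivAt (fun x : ℝ => (x + t) / (x - t))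
        ((1 * (x - t) - (x + t) * 1) / (x - t) ^ 2) x :=
      ((hasDerivAt_id x).add_const t).div ((hasDerivAt_id x).sub_const t) hmt.ne'
    have hgx : (x + t) / (x - t) ≠ 0 := by positivity
    have hlog := hg.log hgx
    have := (hasDerivAt_inv hx0.ne').mul hlog
    simp only [one_div]
    refine this.congr_deriv ?_
    field_simp
    ring
  apply strictAntiOn_of_deriv_neg (convex_Ioi t)
  · exact fun x hx => ((key x hx).continuousAt).continuousWithinAt
  · intro x hx
    rw [interior_Ioi] at hx
    rw [(key x hx).deriv]
    have hxt : t < x := hx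
    have hx0 : (0:ℝ) < x := ht.trans hxt
    have hmt : (0:ℝ) < x - t := by linarith
    have hpt : (0:ℝ) < x + t := by linarith
    have hlogpos : 0 < Real.log ((x + t) / (x - t)) := by
      apply Real.log_pos
      rw [lt_div_iff₀ hmt]; linarith
    have t1 : (-1 / x ^ 2) * Real.log ((x + t) / (x - t)) < 0 := by
      apply mul_neg_of_neg_of_pos _ hlogpos
      apply div_neg_of_neg_of_pos (by norm_num) (by positivity)
    have t2 : (1 / x) * (-(2 * t) / ((x - t) * (x + t))) < 0 := by
      apply mul_neg_of_pos_of_neg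
      · positivity
      · apply div_neg_of_neg_of_pos <;> nlinarith
    linarith

/-- The function `h(x) = (1/x)·ln((x+t)/(x−t))` is strictly decreasing on
`(t, ∞)`; consequently the localization interval for the root of `G` is
nonempty: `ln((λ₃/λ₄)²)/(λ₄−λ₃) < ln((λ₁/λ₂)²)/(λ₂−λ₁)`. -/
theorem stmt7 (t : ℝ) (ht : 0 < t) :
    StrictAntiOn (fun x : ℝ => (1 / x) * Real.log ((x + t) / (x - t)))
      (Set.Ioi t) ∧
    (∀ μ σ δ γ l1 l2 l3 l4 : ℝ,
      0 < μ → 0 < σ → 0 < δ → 0 < γ →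
      l1 = (-μ - Real.sqrt (μ ^ 2 + 2 * σ ^ 2 * δ)) / σ ^ 2 →
      l2 = (-μ + Real.sqrt (μ ^ 2 + 2 * σ ^ 2 * δ)) / σ ^ 2 →
      l3 = (-μ - Real.sqrt (μ ^ 2 + 2 * σ ^ 2 * (δ + γ))) / σ ^ 2 →
      l4 = (-μ + Real.sqrt (μ ^ 2 + 2 * σ ^ 2 * (δ + γ))) / σ ^ 2 →
      Real.log ((l3 / l4) ^ 2) / (l4 - l3) <
        Real.log ((l1 / l2) ^ 2) / (l2 - l1)) := by
  refine ⟨aux_anti t ht, ?_⟩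
  intro μ σ δ γ l1 l2 l3 l4 hμ hσ hδ hγ h1 h2 h3 h4
  set s := Real.sqrt (μ ^ 2 + 2 * σ ^ 2 * δ) with hs
  set r := Real.sqrt (μ ^ 2 + 2 * σ ^ 2 * (δ + γ)) with hr
  have hσ2 : (0:ℝ) < σ ^ 2 := by positivity
  have hμs : μ < s := by
    rw [hs]
    nlinarith [Real.sq_sqrt (by positivity : (0:ℝ) ≤ μ ^ 2 + 2 * σ ^ 2 * δ),
      Real.sqrt_nonneg (μ ^ 2 + 2 * σ ^ 2 * δ)]
  have hsr : s < r := by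
    apply Real.sqrt_lt_sqrt (by positivity)
    nlinarith
  have hμr : μ < r := hμs.trans hsr
  have hs0 : 0 < s := hμ.trans hμs
  have hr0 : 0 < r := hμ.trans hμr
  have e1 : (l1 / l2) ^ 2 = ((s + μ) / (s - μ)) ^ 2 := by
    subst h1 h2
    have hsm : s - μ ≠ 0 := by linarith
    have hms : -μ + s ≠ 0 := by intro h; apply hsm; linarith
    field_simp
    ring
  have e3 : (l3 / l4) ^ 2 = ((r + μ) / (r - μ)) ^ 2 := by
    subst h3 h4
    have hsm : r - μ ≠ 0 := by linarith
    have hms : -μ + r ≠ 0 := by intro h; apply hsm; linarith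
    field_simp
    ring
  have d1 : l2 - l1 = 2 * s / σ ^ 2 := by subst h1 h2; ring
  have d3 : l4 - l3 = 2 * r / σ ^ 2 := by subst h3 h4; ring
  rw [e1, e3, d1, d3, Real.log_pow, Real.log_pow]
  have heq : ∀ y : ℝ, 0 < y →
      (2:ℕ) * Real.log ((y + μ) / (y - μ)) / (2 * y / σ ^ 2)
        = σ ^ 2 * ((1 / y) * Real.log ((y + μ) / (y - μ))) := by
    intro y hy
    field_simp
    ring
  rw [heq s hs0, heq r hr0]
  have := aux_anti μ hμ hμs hμr hsr
  exact (mul_lt_mul_iff_right₀ hσ2).mpr this
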